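/- For any weak composition a, the glide polynomial satisfies the decomposition F̄_a = Σ_b P̄_b, where the sum is over all weak compositions b with b ≥ a in dominance order and b⁺ = a⁺, and P̄_b denotes the kaon generating function over mesonic glides of b. -/

import Mathlib

abbrev Komp : Type := List (ℕ × Bool)

def kex (g : Komp) : ℕ := (g.filter (fun p => p.2)).length

def kval (g : Komp) : List ℕ := g.map Prod.fst

def toKomp (a : List ℕ) : Komp := a.map (fun v => (v, false))

inductive GlideMove : Komp → Komp → Prop
  | m1 (l r : Komp) (p : ℕ) (c : Bool) (hp : 0 < p) :
      GlideMove (l ++ (0, false) :: (p, c) :: r) (l ++ (p, c) :: (0, false) :: r)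
  | m2 (l r : Komp) (p q s : ℕ) (c : Bool) (hq : 0 < q) (hs : 0 < s) (h : q + s = p) :
      GlideMove (l ++ (0, false) :: (p, c) :: r) (l ++ (q, c) :: (s, false) :: r)
  | m3 (l r : Komp) (p q s : ℕ) (c : Bool) (hq : 0 < q) (hs : 0 < s) (h : q + s = p + 1) :
      GlideMove (l ++ (0, false) :: (p, c) :: r) (l ++ (q, c) :: (s, true) :: r)

abbrev Reach := Relation.ReflTransGen GlideMove

theorem move_append_left {g h : Komp} (c : Komp) (m : GlideMove g h) :
    GlideMove (c ++ g) (c ++ h) := by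
  cases m with
  | m1 l r p c' hp => rw [← List.append_assoc, ← List.append_assoc]; exact .m1 _ _ _ _ hp
  | m2 l r p q s c' hq hs h => rw [← List.append_assoc, ← List.append_assoc]; exact .m2 _ _ _ _ _ _ hq hs h
  | m3 l r p q s c' hq hs h => rw [← List.append_assoc, ← List.append_assoc]; exact .m3 _ _ _ _ _ _ hq hs h

theorem move_append_right {g h : Komp} (d : Komp) (m : GlideMove g h) :
    GlideMove (g ++ d) (h ++ d) := by
  cases m with
  | m1 l r p c' hp =>
      simpa [List.append_assoc] using GlideMove.m1 l (r ++ d) p c' hp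
  | m2 l r p q s c' hq hs h =>
      simpa [List.append_assoc] using GlideMove.m2 l (r ++ d) p q s c' hq hs h
  | m3 l r p q s c' hq hs h =>
      simpa [List.append_assoc] using GlideMove.m3 l (r ++ d) p q s c' hq hs h

theorem reach_append_left {g h : Komp} (c : Komp) (m : Reach g h) :
    Reach (c ++ g) (c ++ h) :=
  Relation.ReflTransGen.lift (c ++ ·) (fun _ _ hm => move_append_left c hm) _ _ m

theorem reach_append_right {g h : Komp} (d : Komp) (m : Reach g h) :
    Reach (g ++ d) (h ++ d) :=
  Relation.ReflTransGen.lift (· ++ d) (fun _ _ hm => move_append_right d hm) _ _ m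

theorem reach_cons {g h : Komp} (x : ℕ × Bool) (m : Reach g h) :
    Reach (x :: g) (x :: h) := reach_append_left [x] m

theorem bubble (k : ℕ) (p : ℕ) (c : Bool) (r : Komp) (hp : 0 < p) :
    Reach (List.replicate k ((0:ℕ), false) ++ (p, c) :: r)
      ((p, c) :: (List.replicate k ((0:ℕ), false) ++ r)) := by
  induction k generalizing r with
  | zero => simpa using Relation.ReflTransGen.refl
  | succ n ih =>
      have step : GlideMove (List.replicate n ((0:ℕ),false) ++ (0,false) :: (p,c) :: r)
          (List.replicate n ((0:ℕ),false) ++ (p,c) :: (0,false) :: r) :=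
        GlideMove.m1 _ _ _ _ hp
      have h1 : Reach (List.replicate (n+1) ((0:ℕ),false) ++ (p,c) :: r)
          (List.replicate n ((0:ℕ),false) ++ (p,c) :: (0,false) :: r) := by
        rw [List.replicate_succ' ]
        rw [List.append_assoc]
        exact Relation.ReflTransGen.single (by simpa using step)
      refine h1.trans ?_
      have := ih ((0,false) :: r)
      refine this.trans ?_
      have : List.replicate (n+1) ((0:ℕ),false) ++ r = List.replicate n ((0:ℕ),false) ++ (0,false) :: r := by
        rw [List.replicate_succ']; simp
      rw [this]

/-- Move an arbitrary interleaving of zeros into a list of positive entries. -/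
theorem shuffle (seg : Komp) (hz : ∀ x ∈ seg, x.1 = 0 → x.2 = false) :
    Reach (List.replicate ((seg.filter (fun p => p.1 == 0)).length) ((0:ℕ), false)
        ++ seg.filter (fun p => p.1 != 0)) seg := by
  induction seg with
  | nil => simpa using Relation.ReflTransGen.refl
  | cons e t ih =>
      by_cases he : e.1 = 0
      · have he2 : e = ((0:ℕ), false) := by
          have := hz e (by simp) he
          cases e; simp_all
        subst he2
        have h1 : List.filter (fun p : ℕ × Bool => p.1 == 0) (((0:ℕ),false) :: t)
            = ((0:ℕ),false) :: List.filter (fun p : ℕ × Bool => p.1 == 0) t := by simp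
        have h2 : List.filter (fun p : ℕ × Bool => p.1 != 0) (((0:ℕ),false) :: t)
            = List.filter (fun p : ℕ × Bool => p.1 != 0) t := by simp
        rw [h1, h2, List.length_cons, List.replicate_succ, List.cons_append]
        exact reach_cons _ (ih (fun x hx => hz x (by simp [hx])))
      · have hef : (fun p : ℕ × Bool => p.1 == 0) e = false := by simp [he]
        have het : (fun p : ℕ × Bool => p.1 != 0) e = true := by simp [he]
        have h1 : List.filter (fun p : ℕ × Bool => p.1 == 0) (e :: t)
            = List.filter (fun p : ℕ × Bool => p.1 == 0) t := by simp [hef]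
        have h2 : List.filter (fun p : ℕ × Bool => p.1 != 0) (e :: t)
            = e :: List.filter (fun p : ℕ × Bool => p.1 != 0) t := by simp [het]
        rw [h1, h2]
        obtain ⟨pe, ce⟩ := e
        have hpe : 0 < pe := Nat.pos_of_ne_zero he
        refine (bubble _ pe ce _ hpe).trans (reach_cons _ (ih (fun x hx => hz x (by simp [hx]))))

theorem compact : ∀ (n : ℕ) (E : Komp) (v : ℕ), E.length ≤ n → E ≠ [] →
    (∀ x ∈ E, 0 < x.1) → (∀ p ∈ E.head?, p.2 = false) →
    (kval E).sum = v + kex E →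
    Reach (List.replicate (E.length - 1) ((0:ℕ), false) ++ [(v, false)]) E := by
  intro n
  induction n with
  | zero => intro E v hn hne; simp at hn; simp [hn] at hne
  | succ n ih =>
      rintro (_ | ⟨⟨p₁, c₁⟩, E'⟩) v hn hne hpos hhead hsum
      · exact absurd rfl hne
      have hc₁ : c₁ = false := hhead _ rfl
      subst hc₁
      match E' with
      | [] =>
          have : p₁ = v := by simpa [kval, kex] using hsum
          subst this
          simpa using Relation.ReflTransGen.refl
      | (p₂, c₂) :: E'' =>
          have hp₁ : 0 < p₁ := hpos (p₁, false) (by simp)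
          have hp₂ : 0 < p₂ := hpos (p₂, c₂) (by simp)
          set P : ℕ := p₁ + p₂ - (if c₂ then 1 else 0) with hP
          have hPpos : 0 < P := by cases c₂ <;> simp [hP] <;> omega
          have hsum' : (kval ((P, false) :: E'')).sum = v + kex ((P, false) :: E'') := by
            have := hsum
            cases c₂ <;> simp [kval, kex, hP] at this ⊢ <;> omega
          have hreach := ih ((P, false) :: E'') v (by simp at hn ⊢; omega) (by simp)
            (by rintro x hx
                rcases List.mem_cons.mp hx with h | h
                · simp [h, hPpos]
                · exact hpos x (by simp [h]))
            (by simp) hsum'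
          have hlen : ((p₁, false) :: (p₂, c₂) :: E'').length - 1
              = (((P, false) :: E'').length - 1) + 1 := by simp
          rw [hlen, List.replicate_succ, List.cons_append]
          have step1 : Reach (((0:ℕ),false) :: (List.replicate (((P, false) :: E'').length - 1) ((0:ℕ), false) ++ [(v, false)]))
              (((0:ℕ),false) :: (P, false) :: E'') := reach_cons _ hreach
          refine step1.trans (Relation.ReflTransGen.single ?_)
          cases c₂ with
          | false =>
              have hq : p₁ + p₂ = P := by simp [hP]
              exact GlideMove.m2 [] E'' P p₁ p₂ false hp₁ hp₂ hq
          | true =>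
              have hq : p₁ + p₂ = P + 1 := by simp [hP]; omega
              exact GlideMove.m3 [] E'' P p₁ p₂ false hp₁ hp₂ hq

def IsGlide (a : List ℕ) (g : Komp) : Prop :=
  Relation.ReflTransGen GlideMove (toKomp a) g

def BlackFirst (seg : Komp) : Prop :=
  ∀ p ∈ (seg.dropWhile fun q => q.1 == 0).head?, p.2 = false

def IsBlock (v : ℕ) (seg : Komp) : Prop :=
  (kval seg).sum = v + kex seg ∧
  (∀ p ∈ seg, p.2 = true → 0 < p.1) ∧
  BlackFirst seg ∧
  (∀ p ∈ seg.getLast?, p.1 ≠ 0)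

inductive MesonicGlide : List ℕ → Komp → Prop
  | zeros (k : ℕ) :
      MesonicGlide (List.replicate k 0) (List.replicate k ((0 : ℕ), false))
  | block (z v : ℕ) (hv : 0 < v) (seg : Komp) (a' : List ℕ) (g' : Komp)
      (hlen : seg.length = z + 1) (hseg : IsBlock v seg)
      (h : MesonicGlide a' g') :
      MesonicGlide (List.replicate z 0 ++ v :: a') (seg ++ g')
def Dominates (b a : List ℕ) : Prop :=
  b.length = a.length ∧ ∀ i : ℕ, (a.take i).sum ≤ (b.take i).sum

def posPart (a : List ℕ) : List ℕ := a.filter (fun v => v != 0)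
noncomputable def xmonoPos (w : List ℕ) : MvPolynomial ℕ (Polynomial ℤ) :=
  ∏ i ∈ Finset.range w.length, MvPolynomial.X (i + 1) ^ w.getD i 0

noncomputable def glidePoly (a : List ℕ) : MvPolynomial ℕ (Polynomial ℤ) :=
  ∑ᶠ g ∈ {g : Komp | IsGlide a g},
    MvPolynomial.C (Polynomial.X ^ kex g) * xmonoPos (kval g)

noncomputable def kaonPoly (b : List ℕ) : MvPolynomial ℕ (Polynomial ℤ) :=
  ∑ᶠ g ∈ {g : Komp | MesonicGlide b g},
    MvPolynomial.C (Polynomial.X ^ kex g) * xmonoPos (kval g)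

theorem head_filter_eq_dropWhile (seg : Komp) :
    (seg.filter fun p => p.1 != 0).head? = (seg.dropWhile fun q => q.1 == 0).head? := by
  induction seg with
  | nil => rfl
  | cons e t ih =>
      by_cases he : e.1 = 0
      · simpa [List.filter_cons, List.dropWhile_cons, he] using ih
      · simp [List.filter_cons, List.dropWhile_cons, he]

theorem kex_cons (e : ℕ × Bool) (l : Komp) :
    kex (e :: l) = (if e.2 = true then 1 else 0) + kex l := by
  unfold kex; rw [List.filter_cons]; cases he : e.2 <;> simp [he, Nat.add_comm]

theorem kval_sum_cons (e : ℕ × Bool) (l : Komp) :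
    (kval (e :: l)).sum = e.1 + (kval l).sum := by simp [kval]

theorem filter_stats (seg : Komp) (hz : ∀ x ∈ seg, x.1 = 0 → x.2 = false) :
    kex (seg.filter fun p => p.1 != 0) = kex seg ∧
    (kval (seg.filter fun p => p.1 != 0)).sum = (kval seg).sum ∧
    (seg.filter fun p => p.1 == 0).length + (seg.filter fun p => p.1 != 0).length
      = seg.length := by
  induction seg with
  | nil => simp [kex, kval]
  | cons e t ih =>
      obtain ⟨ih1, ih2, ih3⟩ := ih (fun x hx h => hz x (by simp [hx]) h)
      by_cases he : e.1 = 0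
      · have he2 : e.2 = false := hz e (by simp) he
        have hf1 : (e :: t).filter (fun p => p.1 != 0) = t.filter (fun p => p.1 != 0) := by
          rw [List.filter_cons]; simp [he]
        have hf2 : (e :: t).filter (fun p => p.1 == 0) = e :: t.filter (fun p => p.1 == 0) := by
          rw [List.filter_cons]; simp [he]
        refine ⟨?_, ?_, ?_⟩
        · rw [hf1, ih1, kex_cons, he2]; simp
        · rw [hf1, ih2, kval_sum_cons, he]; simp
        · rw [hf1, hf2]; simp; omega
      · have hf1 : (e :: t).filter (fun p => p.1 != 0) = e :: t.filter (fun p => p.1 != 0) := by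
          rw [List.filter_cons]; simp [he]
        have hf2 : (e :: t).filter (fun p => p.1 == 0) = t.filter (fun p => p.1 == 0) := by
          rw [List.filter_cons]; simp [he]
        refine ⟨?_, ?_, ?_⟩
        · rw [hf1, kex_cons, kex_cons, ih1]
        · rw [hf1, kval_sum_cons, kval_sum_cons, ih2]
        · rw [hf1, hf2]; simp; omega

theorem blockBuild {v z : ℕ} {seg : Komp} (hb : IsBlock v seg) (hlen : seg.length = z + 1) :
    Reach (List.replicate z ((0:ℕ), false) ++ [(v, false)]) seg := by
  obtain ⟨hsum, hred, hbf, hlast⟩ := hb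
  have hz : ∀ x ∈ seg, x.1 = 0 → x.2 = false := by
    intro x hx h0
    by_contra hc
    have : x.2 = true := by cases hx2 : x.2 <;> simp_all
    exact absurd (hred x hx this) (by omega)
  set E : Komp := seg.filter (fun p => p.1 != 0) with hE
  set Z : Komp := seg.filter (fun p => p.1 == 0) with hZ
  obtain ⟨hex, hval, hcount⟩ := filter_stats seg hz
  rw [← hE] at hex hval
  rw [← hE, ← hZ] at hcount
  have hne : seg ≠ [] := by intro h; rw [h] at hlen; simp at hlen
  have hEne : E ≠ [] := by
    have hlast' : seg.getLast hne ∈ seg := List.getLast_mem hne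
    have h0 : (seg.getLast hne).1 ≠ 0 := hlast _ (List.getLast?_eq_getLast hne ▸ rfl)
    intro hEnil
    have : seg.getLast hne ∈ E := by
      rw [hE, List.mem_filter]
      exact ⟨hlast', by simpa using h0⟩
    simp [hEnil] at this
  have hElen : 1 ≤ E.length := List.length_pos_iff.mpr hEne
  have hzz : z = Z.length + (E.length - 1) := by omega
  have hsplit : List.replicate z ((0:ℕ), false) ++ [(v, false)]
      = List.replicate Z.length ((0:ℕ), false)
        ++ (List.replicate (E.length - 1) ((0:ℕ), false) ++ [(v, false)]) := by
    rw [hzz, List.replicate_add, List.append_assoc]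
  rw [hsplit]
  have hcomp : Reach (List.replicate (E.length - 1) ((0:ℕ), false) ++ [(v, false)]) E := by
    refine compact E.length E v le_rfl hEne ?_ ?_ ?_
    · intro x hx
      rw [hE, List.mem_filter] at hx
      have := hx.2; simp at this; omega
    · intro p hp
      apply hbf
      rw [← head_filter_eq_dropWhile]
      exact hp
    · rw [hval, hex]; exact hsum
  refine (reach_append_left _ hcomp).trans ?_
  exact shuffle seg hz

theorem toKomp_replicate (k : ℕ) : toKomp (List.replicate k 0) = List.replicate k ((0:ℕ), false) := by
  simp [toKomp]

theorem toKomp_append (l m : List ℕ) : toKomp (l ++ m) = toKomp l ++ toKomp m := by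
  simp [toKomp]

theorem toKomp_cons (v : ℕ) (l : List ℕ) : toKomp (v :: l) = (v, false) :: toKomp l := rfl

theorem mesonic_reach {b : List ℕ} {g : Komp} (h : MesonicGlide b g) :
    Reach (toKomp b) g := by
  induction h with
  | zeros k => rw [toKomp_replicate]
  | block z v hv seg a' g' hlen hseg h ih =>
      rw [toKomp_append, toKomp_replicate, toKomp_cons]
      have h1 : List.replicate z ((0:ℕ), false) ++ (v, false) :: toKomp a'
          = (List.replicate z ((0:ℕ), false) ++ [(v, false)]) ++ toKomp a' := by
        simp
      rw [h1]
      exact (reach_append_right _ (blockBuild hseg hlen)).trans (reach_append_left seg ih)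

theorem dominates_refl (a : List ℕ) : Dominates a a := ⟨rfl, fun _ => le_rfl⟩

theorem dominates_trans {c b a : List ℕ} (h1 : Dominates c b) (h2 : Dominates b a) :
    Dominates c a := ⟨h1.1.trans h2.1, fun i => (h2.2 i).trans (h1.2 i)⟩

theorem dominates_cons {b a : List ℕ} (x : ℕ) (h : Dominates b a) :
    Dominates (x :: b) (x :: a) := by
  refine ⟨by simp [h.1], fun i => ?_⟩
  cases i with
  | zero => simp
  | succ i => rw [List.take_succ_cons, List.take_succ_cons, List.sum_cons, List.sum_cons]
              exact Nat.add_le_add_left (h.2 i) x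

theorem decompList (a : List ℕ) :
    (∃ k, a = List.replicate k 0) ∨ ∃ z v t, 0 < v ∧ a = List.replicate z 0 ++ v :: t := by
  induction a with
  | nil => exact Or.inl ⟨0, rfl⟩
  | cons x a' ih =>
      by_cases hx : x = 0
      · subst hx
        rcases ih with ⟨k, hk⟩ | ⟨z, v, t, hv, ht⟩
        · exact Or.inl ⟨k + 1, by rw [hk, List.replicate_succ]⟩
        · exact Or.inr ⟨z + 1, v, t, hv, by rw [ht, List.replicate_succ]; rfl⟩
      · exact Or.inr ⟨0, x, a', Nat.pos_of_ne_zero hx, rfl⟩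

theorem sum_take_rep (k : ℕ) (L : List ℕ) (i : ℕ) :
    ((List.replicate k (0:ℕ) ++ L).take i).sum = (L.take (i - k)).sum := by
  rw [List.take_append, List.sum_append, List.take_replicate]
  simp

theorem posPart_replicate (k : ℕ) : _root_.posPart (List.replicate k (0:ℕ)) = [] := by
  simp [_root_.posPart, List.filter_replicate]

theorem posPart_cons_zero (a : List ℕ) : _root_.posPart (0 :: a) = _root_.posPart a := by
  simp [_root_.posPart, List.filter_cons]

theorem posPart_cons_pos {v : ℕ} (hv : v ≠ 0) (a : List ℕ) :
    _root_.posPart (v :: a) = v :: _root_.posPart a := by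
  simp [_root_.posPart, List.filter_cons, hv]

theorem posPart_rep_append (z : ℕ) (l : List ℕ) :
    _root_.posPart (List.replicate z 0 ++ l) = _root_.posPart l := by
  unfold _root_.posPart; rw [List.filter_append, List.filter_replicate]; simp

theorem reach_toKomp : ∀ (n : ℕ) (a b : List ℕ), a.length ≤ n → Dominates b a →
    posPart b = posPart a → Reach (toKomp a) (toKomp b) := by
  intro n
  induction n with
  | zero =>
      intro a b hn hdom _
      have ha : a = [] := List.length_eq_zero_iff.mp (Nat.le_zero.mp hn)
      subst ha
      have hb : b = [] := List.length_eq_zero_iff.mp hdom.1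
      subst hb; exact .refl
  | succ n ih =>
      rintro (_ | ⟨x, a'⟩) b hn hdom hpp
      · have hb : b = [] := List.length_eq_zero_iff.mp hdom.1
        subst hb; exact .refl
      obtain (_ | ⟨y, b'⟩) := b
      · exact absurd hdom.1 (by simp)
      by_cases hxy : x = y
      · subst hxy
        have hdom' : Dominates b' a' := by
          refine ⟨by have := hdom.1; simpa using this, fun i => ?_⟩
          have := hdom.2 (i + 1)
          rw [List.take_succ_cons, List.take_succ_cons, List.sum_cons, List.sum_cons] at this
          omega
        have hpp' : posPart b' = posPart a' := by
          by_cases hx : x = 0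
          · subst hx; rwa [posPart_cons_zero, posPart_cons_zero] at hpp
          · rw [posPart_cons_pos hx, posPart_cons_pos hx] at hpp
            exact (List.cons.injEq _ _ _ _).mp hpp |>.2
        rw [toKomp_cons, toKomp_cons]
        exact reach_cons _ (ih a' b' (by simpa using hn) hdom' hpp')
      · -- x must be 0, y positive
        have hxley : x ≤ y := by
          have := hdom.2 1
          simpa using this
        have hx0 : x = 0 := by
          by_contra hx
          have hy : y ≠ 0 := by omega
          rw [posPart_cons_pos hx, posPart_cons_pos hy] at hpp
          exact hxy ((List.cons.injEq _ _ _ _).mp hpp).1.symm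
        subst hx0
        have hy : y ≠ 0 := fun h => hxy h.symm
        rw [posPart_cons_pos hy, posPart_cons_zero] at hpp
        -- a' = replicate j 0 ++ w :: t
        rcases decompList a' with ⟨k, hk⟩ | ⟨j, w, t, hw, hsplit⟩
        · rw [hk, posPart_replicate] at hpp; exact absurd hpp (by simp)
        have hppa' : posPart a' = w :: posPart t := by
          rw [hsplit, posPart_rep_append, posPart_cons_pos (by omega)]
        rw [hppa'] at hpp
        obtain ⟨hyw, hppt⟩ := (List.cons.injEq _ _ _ _).mp hpp
        subst hyw
        -- moves: bubble w to the front
        have hstep : Reach (toKomp (0 :: a')) (toKomp (y :: (List.replicate (j+1) 0 ++ t))) := by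
          rw [hsplit, toKomp_cons, toKomp_append, toKomp_replicate, toKomp_cons,
            toKomp_cons, toKomp_append, toKomp_replicate]
          have : ((0:ℕ), false) :: (List.replicate j ((0:ℕ),false) ++ (y, false) :: toKomp t)
              = List.replicate (j+1) ((0:ℕ),false) ++ (y, false) :: toKomp t := by
            rw [List.replicate_succ]; rfl
          rw [this]
          exact bubble (j+1) y false (toKomp t) hw
        refine hstep.trans ?_
        rw [toKomp_cons, toKomp_cons]
        refine reach_cons _ (ih _ b' ?_ ?_ ?_)
        · have hlen : a'.length = j + 1 + t.length := by rw [hsplit]; simp; omega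
          simp at hn ⊢
          omega
        · constructor
          · have := hdom.1
            simp [hsplit] at this ⊢
            omega
          · intro i
            have hkey := hdom.2 (i + 1)
            rw [List.take_succ_cons, List.take_succ_cons, List.sum_cons, List.sum_cons] at hkey
            rw [hsplit, sum_take_rep] at hkey
            rw [sum_take_rep]
            rcases Nat.lt_or_ge i (j+1) with hij | hij
            · have : i - (j + 1) = 0 := by omega
              rw [this]; simp
            · have h1 : i - j = (i - (j+1)) + 1 := by omega
              rw [h1, List.take_succ_cons, List.sum_cons] at hkey
              omega
        · rw [posPart_rep_append]; exact hppt

theorem mesonic_toKomp : ∀ (n : ℕ) (a : List ℕ), a.length ≤ n → MesonicGlide a (toKomp a) := by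
  intro n
  induction n with
  | zero =>
      intro a hn
      have : a = [] := List.length_eq_zero_iff.mp (Nat.le_zero.mp hn)
      subst this
      exact (toKomp_replicate 0) ▸ MesonicGlide.zeros 0
  | succ n ih =>
      intro a hn
      rcases decompList a with ⟨k, hk⟩ | ⟨z, v, t, hv, hsplit⟩
      · subst hk; rw [toKomp_replicate]; exact MesonicGlide.zeros k
      subst hsplit
      have hblock : IsBlock v (List.replicate z ((0:ℕ), false) ++ [(v, false)]) := by
        refine ⟨?_, ?_, ?_, ?_⟩
        · simp [kval, kex, List.filter_append, List.filter_replicate]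
        · intro p hp hc
          rcases List.mem_append.mp hp with h | h
          · rw [List.eq_of_mem_replicate h] at hc; simp at hc
          · simp at h; rw [h] at hc; simp at hc
        · intro p hp
          rw [List.dropWhile_append] at hp
          simp [List.dropWhile_replicate, List.dropWhile_cons, Nat.pos_iff_ne_zero.mp hv] at hp
          rw [← hp]
        · intro p hp
          rw [List.getLast?_append] at hp
          simp at hp
          rw [← hp]
          simp
          omega
      have hlen : (List.replicate z ((0:ℕ), false) ++ [(v, false)]).length = z + 1 := by simp
      have := MesonicGlide.block z v hv _ t (toKomp t) hlen hblock
        (ih t (by have h2 : z + (t.length + 1) ≤ n + 1 := by simpa using hn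
                  omega))
      rw [toKomp_append, toKomp_replicate, toKomp_cons]
      simpa using this

theorem kex_append (l m : Komp) : kex (l ++ m) = kex l + kex m := by
  simp [kex, List.filter_append]

theorem kval_sum_append (l m : Komp) : (kval (l ++ m)).sum = (kval l).sum + (kval m).sum := by
  simp [kval]

theorem mesonic_length {b : List ℕ} {g : Komp} (h : MesonicGlide b g) : g.length = b.length := by
  induction h with
  | zeros k => simp
  | block z v hv seg a' g' hlen hseg h ih => simp [hlen, ih]; omega

theorem kex_le_sum (t : Komp) (h : ∀ x ∈ t, x.2 = true → 0 < x.1) : kex t ≤ (kval t).sum := by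
  induction t with
  | nil => simp [kex, kval]
  | cons e t' ih =>
      rw [kex_cons, kval_sum_cons]
      have ih' := ih (fun x hx => h x (by simp [hx]))
      cases hc : e.2
      · simpa using ih'.trans (Nat.le_add_left _ _)
      · have := h e (by simp) hc
        simp only [if_pos trivial, if_true]
        omega

theorem nonzero_red (t : Komp) (h : ∀ x ∈ t, x.2 = true → 0 < x.1)
    (hs : (kval t).sum = kex t) : ∀ x ∈ t, x.1 ≠ 0 → x.2 = true := by
  induction t with
  | nil => simp
  | cons e t' ih =>
      rw [kex_cons, kval_sum_cons] at hs
      have hle := kex_le_sum t' (fun x hx => h x (by simp [hx]))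
      have hsum' : (kval t').sum = kex t' := by
        cases hc : e.2
        · rw [hc] at hs; simp at hs; omega
        · have hp := h e (by simp) hc
          rw [hc] at hs; simp at hs; omega
      intro x hx hx1
      rcases List.mem_cons.mp hx with hxe | hx'
      · subst hxe
        cases hc : x.2
        · rw [hc] at hs; simp at hs; omega
        · rfl
      · exact ih (fun y hy => h y (by simp [hy])) hsum' x hx' hx1

theorem dropWhile_head_nonzero {t : Komp} {e : ℕ × Bool} {rest : Komp}
    (hd : t.dropWhile (fun q => q.1 == 0) = e :: rest) : e ∈ t ∧ e.1 ≠ 0 := by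
  constructor
  · exact (List.dropWhile_sublist _).mem (hd ▸ List.mem_cons_self (a := e) (l := rest))
  · have := List.head?_dropWhile_not (fun q : ℕ × Bool => q.1 == 0) t
    rw [hd] at this
    simpa using this

theorem mesonic_blackFirst {b : List ℕ} {g : Komp} (h : MesonicGlide b g) :
    ∀ p ∈ (g.dropWhile fun q => q.1 == 0).head?, p.2 = false := by
  induction h with
  | zeros k =>
      intro p hp
      rw [List.dropWhile_replicate] at hp
      simp at hp
  | block z v hv seg a' g' hlen hseg h ih =>
      intro p hp
      have hne : seg ≠ [] := by intro hc; rw [hc] at hlen; simp at hlen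
      have hdw : seg.dropWhile (fun q => q.1 == 0) ≠ [] := by
        intro hc
        have hall := List.dropWhile_eq_nil_iff.mp hc
        have hmem := List.getLast_mem hne
        have := hall _ hmem
        have hlmem : seg.getLast hne ∈ seg.getLast? := by
          rw [List.getLast?_eq_getLast hne]; rfl
        exact hseg.2.2.2 _ hlmem (by simpa using this)
      rw [List.dropWhile_append] at hp
      have hemp : (seg.dropWhile (fun q => q.1 == 0)).isEmpty = false := by
        simpa [List.isEmpty_iff] using hdw
      rw [hemp] at hp
      rw [if_neg (by simp)] at hp
      rw [List.head?_append] at hp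
      obtain ⟨e, rest, hd⟩ := List.exists_cons_of_ne_nil hdw
      rw [hd] at hp
      simp at hp
      subst hp
      exact hseg.2.2.1 e (by rw [hd]; rfl)

theorem block_absorb {v : ℕ} {seg seg₂ t g₁ g₂ : Komp} {a' : List ℕ}
    (hb : IsBlock v seg) (hb₂ : IsBlock v seg₂) (hseg2 : seg₂ = seg ++ t)
    (hg : g₁ = t ++ g₂) (hm : MesonicGlide a' g₁) : t = [] := by
  by_contra htne
  have hsum : (kval t).sum = kex t := by
    have h1 := hb.1
    have h2 := hb₂.1
    rw [hseg2, kval_sum_append, kex_append] at h2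
    omega
  have hlast : ∀ p ∈ t.getLast?, p.1 ≠ 0 := by
    intro p hp
    apply hb₂.2.2.2
    rw [hseg2, List.getLast?_append_of_ne_nil seg htne]
    exact hp
  have hredpos : ∀ x ∈ t, x.2 = true → 0 < x.1 := by
    intro x hx
    exact hb₂.2.1 x (by rw [hseg2]; exact List.mem_append_right _ hx)
  have hdw : t.dropWhile (fun q => q.1 == 0) ≠ [] := by
    intro hc
    have hall := List.dropWhile_eq_nil_iff.mp hc
    have hmem := List.getLast_mem htne
    have hlmem : t.getLast htne ∈ t.getLast? := by
      rw [List.getLast?_eq_getLast htne]; rfl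
    exact hlast _ hlmem (by simpa using hall _ hmem)
  obtain ⟨e, rest, hd⟩ := List.exists_cons_of_ne_nil hdw
  obtain ⟨hemem, he1⟩ := dropWhile_head_nonzero hd
  have hered : e.2 = true := nonzero_red t hredpos hsum e hemem he1
  -- but first nonzero of g₁ must be black
  have hbf := mesonic_blackFirst hm
  rw [hg] at hbf
  have hemp : (t.dropWhile (fun q => q.1 == 0)).isEmpty = false := by
    simpa [List.isEmpty_iff] using hdw
  rw [List.dropWhile_append, hemp, if_neg (by simp), List.head?_append, hd] at hbf
  have := hbf e (by rfl)
  rw [hered] at this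
  simp at this

theorem mesonic_cases {b : List ℕ} {g : Komp} (h : MesonicGlide b g) :
    (∃ k, b = List.replicate k 0 ∧ g = List.replicate k ((0:ℕ), false)) ∨
    (∃ z v seg a' g', 0 < v ∧ seg.length = z + 1 ∧ IsBlock v seg ∧ MesonicGlide a' g' ∧
      b = List.replicate z 0 ++ v :: a' ∧ g = seg ++ g') := by
  cases h with
  | zeros k => exact Or.inl ⟨k, rfl, rfl⟩
  | block z v hv seg a' g' hlen hseg h => exact Or.inr ⟨z, v, seg, a', g', hv, hlen, hseg, h, rfl, rfl⟩

theorem isBlock_last_nonzero {v : ℕ} {seg : Komp} (hb : IsBlock v seg) (hne : seg ≠ []) :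
    ∃ e ∈ seg, e.1 ≠ 0 :=
  ⟨seg.getLast hne, List.getLast_mem hne,
    hb.2.2.2 _ (by rw [List.getLast?_eq_getLast hne]; rfl)⟩

theorem mesonic_unique : ∀ (n : ℕ) (b b' : List ℕ) (g : Komp), b.length ≤ n →
    MesonicGlide b g → MesonicGlide b' g → _root_.posPart b = _root_.posPart b' →
    b.length = b'.length → b = b' := by
  intro n
  induction n with
  | zero =>
      intro b b' g hn _ _ _ hlen
      have hb : b = [] := List.length_eq_zero_iff.mp (Nat.le_zero.mp hn)
      subst hb
      exact (List.length_eq_zero_iff.mp hlen.symm).symm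
  | succ n ih =>
      intro b b' g hn hm1 hm2 hpp hlen
      rcases mesonic_cases hm1 with ⟨k, hb, hg⟩ | ⟨z, v, seg, a', g₁, hv, hlen₁, hseg, hmes, hb, hg⟩ <;>
        rcases mesonic_cases hm2 with ⟨k', hb', hg'⟩ | ⟨z₂, v₂, seg₂, a₂', g₂, hv₂, hlen₂, hseg₂, hmes₂, hb', hg'⟩
      · subst hb hb'
        have : k = k' := by simpa using hlen
        rw [this]
      · exfalso
        have hne₂ : seg₂ ≠ [] := by intro hc; rw [hc] at hlen₂; simp at hlen₂
        obtain ⟨e, hemem, he1⟩ := isBlock_last_nonzero hseg₂ hne₂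
        have : e ∈ List.replicate k ((0:ℕ), false) := by
          rw [← hg, hg']
          exact List.mem_append_left _ hemem
        exact he1 (by rw [List.eq_of_mem_replicate this])
      · exfalso
        have hne₁ : seg ≠ [] := by intro hc; rw [hc] at hlen₁; simp at hlen₁
        obtain ⟨e, hemem, he1⟩ := isBlock_last_nonzero hseg hne₁
        have : e ∈ List.replicate k' ((0:ℕ), false) := by
          rw [← hg', hg]
          exact List.mem_append_left _ hemem
        exact he1 (by rw [List.eq_of_mem_replicate this])
      · -- block vs block
        have hppb : _root_.posPart b = v :: _root_.posPart a' := by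
          rw [hb, posPart_rep_append, posPart_cons_pos (by omega)]
        have hppb' : _root_.posPart b' = v₂ :: _root_.posPart a₂' := by
          rw [hb', posPart_rep_append, posPart_cons_pos (by omega)]
        rw [hppb, hppb'] at hpp
        obtain ⟨hvv, hppt⟩ := (List.cons.injEq _ _ _ _).mp hpp
        subst hvv
        have hgg : seg ++ g₁ = seg₂ ++ g₂ := by rw [← hg, ← hg']
        have hsegeq : seg = seg₂ ∧ g₁ = g₂ := by
          rcases List.append_eq_append_iff.mp hgg with ⟨t, hs2, hg1⟩ | ⟨t, hs1, hg2⟩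
          · have ht : t = [] := block_absorb hseg hseg₂ hs2 hg1 hmes
            subst ht
            constructor
            · rw [hs2]; simp
            · rw [hg1]; simp
          · have ht : t = [] := block_absorb hseg₂ hseg hs1 hg2 hmes₂
            subst ht
            constructor
            · rw [hs1]; simp
            · rw [hg2]; simp
        obtain ⟨hseq, hgeq⟩ := hsegeq
        have hz : z = z₂ := by rw [hseq] at hlen₁; omega
        have hlena : a'.length = a₂'.length := by
          have l1 := mesonic_length hmes
          have l2 := mesonic_length hmes₂
          rw [← hgeq] at l2
          omega
        have ha : a' = a₂' := by
          refine ih a' a₂' g₁ ?_ hmes (hgeq ▸ hmes₂) hppt hlena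
          have : b.length = z + 1 + a'.length := by rw [hb]; simp; omega
          omega
        rw [hb, hb', hz, ha]

theorem split3 {α : Type*} : ∀ (s : List α) (l t r : List α) (x y : α),
    s ++ t = l ++ x :: y :: r →
    (∃ r₁, s = l ++ x :: y :: r₁ ∧ r = r₁ ++ t) ∨
    (s = l ++ [x] ∧ t = y :: r) ∨
    (∃ l₂, l = s ++ l₂ ∧ t = l₂ ++ x :: y :: r) := by
  intro s
  induction s with
  | nil =>
      intro l t r x y h
      exact Or.inr (Or.inr ⟨l, rfl, by simpa using h⟩)
  | cons a s' ih =>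
      intro l t r x y h
      cases l with
      | nil =>
          simp at h
          obtain ⟨hax, h2⟩ := h
          subst hax
          cases s' with
          | nil =>
              simp at h2
              exact Or.inr (Or.inl ⟨by simp, h2⟩)
          | cons b s'' =>
              simp at h2
              obtain ⟨hby, h3⟩ := h2
              subst hby
              exact Or.inl ⟨s'', by simp, h3.symm⟩
      | cons c l' =>
          simp at h
          obtain ⟨hac, h2⟩ := h
          subst hac
          rcases ih l' t r x y h2 with ⟨r₁, h3, h4⟩ | ⟨h3, h4⟩ | ⟨l₂, h3, h4⟩
          · exact Or.inl ⟨r₁, by simp [h3], h4⟩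
          · exact Or.inr (Or.inl ⟨by simp [h3], h4⟩)
          · exact Or.inr (Or.inr ⟨l₂, by simp [h3], h4⟩)

theorem move_shape {g g' : Komp} (m : GlideMove g g') :
    ∃ l r p c, 0 < p ∧ g = l ++ (0, false) :: (p, c) :: r ∧
      (g' = l ++ (p, c) :: (0, false) :: r ∨
       (∃ q s, 0 < q ∧ 0 < s ∧ q + s = p ∧ g' = l ++ (q, c) :: (s, false) :: r) ∨
       (∃ q s, 0 < q ∧ 0 < s ∧ q + s = p + 1 ∧ g' = l ++ (q, c) :: (s, true) :: r)) := by
  cases m with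
  | m1 l r p c hp => exact ⟨l, r, p, c, hp, rfl, Or.inl rfl⟩
  | m2 l r p q s c hq hs h => exact ⟨l, r, p, c, by omega, rfl, Or.inr (Or.inl ⟨q, s, hq, hs, h, rfl⟩)⟩
  | m3 l r p q s c hq hs h => exact ⟨l, r, p, c, by omega, rfl, Or.inr (Or.inr ⟨q, s, hq, hs, h, rfl⟩)⟩

theorem mesonic_cons_zero {c : List ℕ} {h : Komp} (hm : MesonicGlide c h) :
    MesonicGlide (0 :: c) (((0:ℕ), false) :: h) := by
  rcases mesonic_cases hm with ⟨k, hb, hg⟩ | ⟨z, v, seg, a', g', hv, hlen, hseg, hmes, hb, hg⟩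
  · subst hb; subst hg
    have := MesonicGlide.zeros (k + 1)
    simpa [List.replicate_succ] using this
  · subst hb; subst hg
    have hblock : IsBlock v (((0:ℕ), false) :: seg) := by
      obtain ⟨hs, hr, hbf, hl⟩ := hseg
      refine ⟨by rw [kval_sum_cons, kex_cons]; simpa using hs, ?_, ?_, ?_⟩
      · intro p hp hc
        rcases List.mem_cons.mp hp with h | h
        · rw [h] at hc; simp at hc
        · exact hr p h hc
      · intro p hp
        apply hbf
        rwa [show (((0:ℕ),false) :: seg) = [((0:ℕ),false)] ++ seg by rfl,
          List.dropWhile_append] at hp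
        -- may need adjustment
      · intro p hp
        apply hl
        have hne : seg ≠ [] := by intro hc; rw [hc] at hlen; simp at hlen
        rwa [show (((0:ℕ),false) :: seg) = [((0:ℕ),false)] ++ seg by rfl,
          List.getLast?_append_of_ne_nil _ hne] at hp
    have := MesonicGlide.block (z+1) v hv _ a' g' (by simp [hlen]) hblock hmes
    simpa [List.replicate_succ] using this

theorem bf_preserve {l r₁ : Komp} {p q : ℕ} {c : Bool} (hp : p ≠ 0) (hq : q ≠ 0)
    (h : BlackFirst (l ++ (0, false) :: (p, c) :: r₁)) (r₂ : Komp) :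
    BlackFirst (l ++ (q, c) :: r₂) := by
  intro p' hp'
  unfold BlackFirst at h
  rw [List.dropWhile_append] at h hp'
  cases hemp : (l.dropWhile (fun q => q.1 == 0)).isEmpty with
  | true =>
      rw [hemp, if_pos rfl] at h hp'
      have h1 : List.dropWhile (fun q : ℕ × Bool => q.1 == 0) ((0, false) :: (p, c) :: r₁)
          = (p, c) :: r₁ := by
        rw [List.dropWhile_cons]
        simp [hp]
      have h2 : List.dropWhile (fun q' : ℕ × Bool => q'.1 == 0) ((q, c) :: r₂)
          = (q, c) :: r₂ := by
        rw [List.dropWhile_cons]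
        simp [hq]
      rw [h2] at hp'
      simp at hp'
      rw [← hp']
      exact h (p, c) (by rw [h1]; rfl)
  | false =>
      rw [hemp, if_neg (by simp)] at h hp'
      have hne : l.dropWhile (fun q => q.1 == 0) ≠ [] := by
        intro hc; rw [hc] at hemp; simp at hemp
      obtain ⟨e, rest, hd⟩ := List.exists_cons_of_ne_nil hne
      rw [hd] at h hp'
      simp at hp'
      rw [← hp']
      exact h e (by rfl)

theorem dominates_rep_cons {d c : List ℕ} (z x : ℕ) (h : Dominates d c) :
    Dominates (List.replicate z 0 ++ x :: d) (List.replicate z 0 ++ x :: c) := by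
  induction z with
  | zero => exact dominates_cons x h
  | succ m ih =>
      have := dominates_cons 0 ih
      simpa [List.replicate_succ] using this

theorem dominates_shift (m v : ℕ) (a' : List ℕ) :
    Dominates (List.replicate m 0 ++ v :: 0 :: a') (List.replicate (m+1) 0 ++ v :: a') := by
  constructor
  · simp; omega
  · intro i
    have h1 : ((List.replicate (m+1) (0:ℕ) ++ v :: a').take i).sum
        = ((v :: a').take (i - (m+1))).sum := sum_take_rep _ _ _
    have h2 : ((List.replicate m (0:ℕ) ++ v :: 0 :: a').take i).sum
        = ((v :: 0 :: a').take (i - m)).sum := sum_take_rep _ _ _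
    rw [h1, h2]
    rcases Nat.lt_or_ge i (m+1) with hi | hi
    · have : i - (m+1) = 0 := by omega
      rw [this]; simp
    · obtain ⟨j, hj⟩ : ∃ j, i - (m+1) = j := ⟨_, rfl⟩
      have him : i - m = j + 1 := by omega
      rw [hj, him, List.take_succ_cons, List.sum_cons]
      cases j with
      | zero => simp
      | succ j' =>
          rw [List.take_succ_cons, List.sum_cons, List.take_succ_cons, List.sum_cons]
          simp

theorem getLast?_append_cons_cons (l : Komp) (x y : ℕ × Bool) (r : Komp) (hr : r ≠ []) :
    (l ++ x :: y :: r).getLast? = r.getLast? := by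
  rw [show l ++ x :: y :: r = (l ++ [x, y]) ++ r by simp, List.getLast?_append_of_ne_nil _ hr]

theorem isBlock_replace {v : ℕ} {l r₁ : Komp} {p q s : ℕ} {c cs : Bool}
    (hb : IsBlock v (l ++ (0, false) :: (p, c) :: r₁)) (hp : 0 < p) (hq : 0 < q) (hs : 0 < s)
    (hqs : q + s = p + (if cs then 1 else 0)) :
    IsBlock v (l ++ (q, c) :: (s, cs) :: r₁) := by
  obtain ⟨hsum, hred, hbf, hlast⟩ := hb
  refine ⟨?_, ?_, ?_, ?_⟩
  · rw [kval_sum_append, kval_sum_cons, kval_sum_cons] at hsum ⊢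
    rw [kex_append, kex_cons, kex_cons] at hsum ⊢
    simp only at hsum ⊢
    cases c <;> cases cs <;> simp_all <;> omega
  · intro x hx hc
    rcases List.mem_append.mp hx with h | h
    · exact hred x (List.mem_append_left _ h) hc
    · rcases List.mem_cons.mp h with h | h
      · rw [h]; exact hq
      · rcases List.mem_cons.mp h with h | h
        · rw [h]; exact hs
        · exact hred x (List.mem_append_right _ (by simp [h])) hc
  · exact bf_preserve (by omega) (by omega) hbf _
  · intro e he
    cases hr : r₁ with
    | nil =>
        rw [hr] at he
        rw [show l ++ [(q,c),(s,cs)] = (l ++ [(q,c)]) ++ [(s,cs)] by simp,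
          List.getLast?_append_of_ne_nil _ (by simp)] at he
        simp at he
        rw [← he]; simp; omega
    | cons e' r' =>
        apply hlast
        rw [hr] at he ⊢
        rw [getLast?_append_cons_cons _ _ _ _ (by simp)] at he ⊢
        exact he

theorem isBlock_m1 {v : ℕ} {l r₂ : Komp} {e : ℕ × Bool} {p : ℕ} {c : Bool}
    (hb : IsBlock v (l ++ (0, false) :: (p, c) :: e :: r₂)) (hp : 0 < p) :
    IsBlock v (l ++ (p, c) :: (0, false) :: e :: r₂) := by
  obtain ⟨hsum, hred, hbf, hlast⟩ := hb
  refine ⟨?_, ?_, ?_, ?_⟩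
  · rw [kval_sum_append, kval_sum_cons, kval_sum_cons] at hsum ⊢
    rw [kex_append, kex_cons, kex_cons] at hsum ⊢
    simp only at hsum ⊢
    omega
  · intro x hx hc
    rcases List.mem_append.mp hx with h | h
    · exact hred x (List.mem_append_left _ h) hc
    · rcases List.mem_cons.mp h with h | h
      · exact hred x (List.mem_append_right _ (by simp [h])) hc
      · rcases List.mem_cons.mp h with h | h
        · rw [h] at hc; simp at hc
        · exact hred x (List.mem_append_right _ (by simp [h])) hc
  · exact bf_preserve (by omega) (by omega) hbf _
  · intro x hx
    apply hlast
    rw [getLast?_append_cons_cons _ _ _ _ (by simp)] at hx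
    rw [show l ++ (0,false) :: (p,c) :: e :: r₂ = (l ++ [(0,false),(p,c)]) ++ e :: r₂ by simp,
      List.getLast?_append_of_ne_nil _ (by simp)]
    exact hx

theorem isBlock_m1_end {v : ℕ} {l : Komp} {p : ℕ} {c : Bool}
    (hb : IsBlock v (l ++ [(0, false), (p, c)])) (hp : 0 < p) :
    IsBlock v (l ++ [(p, c)]) := by
  obtain ⟨hsum, hred, hbf, hlast⟩ := hb
  refine ⟨?_, ?_, ?_, ?_⟩
  · cases c <;>
      simp [kval, kex, List.filter_append, List.map_append] at hsum ⊢ <;> omega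
  · intro x hx hc
    rcases List.mem_append.mp hx with h | h
    · exact hred x (List.mem_append_left _ h) hc
    · simp at h
      exact hred x (List.mem_append_right _ (by simp [h])) hc
  · exact bf_preserve (by omega) (by omega) hbf []
  · intro x hx
    rw [List.getLast?_concat] at hx
    simp at hx
    rw [← hx]
    simp; omega

theorem mesonic_step : ∀ (n : ℕ) (b : List ℕ) (g g' : Komp), b.length ≤ n →
    MesonicGlide b g → GlideMove g g' →
    ∃ b₂, b₂.length = b.length ∧ _root_.posPart b₂ = _root_.posPart b ∧
      Dominates b₂ b ∧ MesonicGlide b₂ g' := by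
  intro n
  induction n with
  | zero =>
      intro b g g' hn hm hmv
      exfalso
      obtain ⟨l, r, p, c, hp, hgeq, _⟩ := move_shape hmv
      have hb : b = [] := List.length_eq_zero_iff.mp (Nat.le_zero.mp hn)
      have := mesonic_length hm
      rw [hb, hgeq] at this
      simp at this
  | succ n ih =>
      intro b g g' hn hm hmv
      obtain ⟨l, r, p, c, hp, hgeq, hcases⟩ := move_shape hmv
      rcases mesonic_cases hm with ⟨k, hb, hg⟩ | ⟨z, v, seg, a', g₁, hv, hlen₁, hseg, hmes, hb, hg⟩
      · exfalso
        have : (p, c) ∈ List.replicate k ((0:ℕ), false) := by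
          rw [← hg, hgeq]
          exact List.mem_append_right _ (by simp)
        have := List.eq_of_mem_replicate this
        simp at this
        omega
      · subst hb
        rw [hg] at hgeq
        rcases split3 seg l g₁ r (0, false) (p, c) hgeq with
          ⟨r₁, hsegeq, hr⟩ | ⟨hsegeq, hg₁⟩ | ⟨l₂, hl, hg₁⟩
        · -- window inside seg
          subst hsegeq hr
          have hgsplit : ∀ w₁ w₂ : ℕ × Bool,
              l ++ w₁ :: w₂ :: (r₁ ++ g₁) = (l ++ w₁ :: w₂ :: r₁) ++ g₁ := by
            intro w₁ w₂; simp
          rcases hcases with hm1 | ⟨q, s, hq, hs', hqs, hm2⟩ | ⟨q, s, hq, hs', hqs, hm3⟩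
          · -- m1
            cases r₁ with
            | cons e r₂ =>
                refine ⟨_, rfl, rfl, dominates_refl _, ?_⟩
                rw [hm1, hgsplit]
                exact MesonicGlide.block z v hv _ a' g₁
                  (by simpa using hlen₁) (isBlock_m1 hseg hp) hmes
            | nil =>
                -- boundary case : the zero moves into the next block
                have hz : z = l.length + 1 := by simpa using hlen₁.symm
                refine ⟨List.replicate l.length 0 ++ v :: 0 :: a', ?_, ?_, ?_, ?_⟩
                · simp [hz]; omega
                · rw [posPart_rep_append, posPart_rep_append,
                    posPart_cons_pos (show v ≠ 0 by omega), posPart_cons_zero,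
                    posPart_cons_pos (show v ≠ 0 by omega)]
                · rw [hz]; exact dominates_shift l.length v a'
                · rw [hm1]
                  have : l ++ (p, c) :: (0, false) :: ([] ++ g₁)
                      = (l ++ [(p, c)]) ++ (((0:ℕ), false) :: g₁) := by simp
                  rw [this]
                  exact MesonicGlide.block l.length v hv _ (0 :: a') _
                    (by simp) (isBlock_m1_end hseg hp) (mesonic_cons_zero hmes)
          · -- m2
            refine ⟨_, rfl, rfl, dominates_refl _, ?_⟩
            rw [hm2, hgsplit]
            exact MesonicGlide.block z v hv _ a' g₁ (by simpa using hlen₁)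
              (isBlock_replace hseg hp hq hs' (by simpa using hqs)) hmes
          · -- m3
            refine ⟨_, rfl, rfl, dominates_refl _, ?_⟩
            rw [hm3, hgsplit]
            exact MesonicGlide.block z v hv _ a' g₁ (by simpa using hlen₁)
              (isBlock_replace hseg hp hq hs' (by simpa using hqs)) hmes
        · -- straddling : impossible since seg ends in the zero
          exfalso
          have : ((0:ℕ), false) ∈ seg.getLast? := by
            rw [hsegeq, List.getLast?_concat]; rfl
          exact hseg.2.2.2 _ this rfl
        · -- window inside g₁
          subst hl
          have hmv' : ∃ g₁', GlideMove g₁ g₁' ∧ g' = seg ++ g₁' := by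
            rcases hcases with hm1 | ⟨q, s, hq, hs', hqs, hm2⟩ | ⟨q, s, hq, hs', hqs, hm3⟩
            · exact ⟨l₂ ++ (p, c) :: (0, false) :: r, hg₁ ▸ GlideMove.m1 l₂ r p c hp,
                by rw [hm1]; simp⟩
            · exact ⟨l₂ ++ (q, c) :: (s, false) :: r, hg₁ ▸ GlideMove.m2 l₂ r p q s c hq hs' hqs,
                by rw [hm2]; simp⟩
            · exact ⟨l₂ ++ (q, c) :: (s, true) :: r, hg₁ ▸ GlideMove.m3 l₂ r p q s c hq hs' hqs,
                by rw [hm3]; simp⟩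
          obtain ⟨g₁', hmv₁, hg'⟩ := hmv'
          have hlen_a : a'.length ≤ n := by
            have : (List.replicate z 0 ++ v :: a').length = z + 1 + a'.length := by simp; omega
            omega
          obtain ⟨b₂', hl2, hpp2, hdom2, hmes2⟩ := ih a' g₁ g₁' hlen_a hmes hmv₁
          refine ⟨List.replicate z 0 ++ v :: b₂', ?_, ?_, ?_, ?_⟩
          · simp [hl2]
          · rw [posPart_rep_append, posPart_rep_append,
              posPart_cons_pos (show v ≠ 0 by omega), posPart_cons_pos (show v ≠ 0 by omega), hpp2]
          · exact dominates_rep_cons z v hdom2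
          · rw [hg']
            exact MesonicGlide.block z v hv seg b₂' g₁' hlen₁ hseg hmes2

theorem finite_lists {α : Type*} {s : Set α} (hs : s.Finite) (n : ℕ) :
    {l : List α | l.length = n ∧ ∀ x ∈ l, x ∈ s}.Finite := by
  induction n with
  | zero =>
      refine Set.Finite.subset (Set.finite_singleton ([] : List α)) ?_
      intro l hl
      simp at hl ⊢
      exact hl.1
  | succ n ihn =>
      refine Set.Finite.subset (Set.Finite.image2 List.cons hs ihn) ?_
      rintro (_ | ⟨x, t⟩) hl
      · simp at hl
      · obtain ⟨hlen, hmem⟩ := hl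
        refine Set.mem_image2_of_mem (hmem x (by simp)) ⟨by simpa using hlen, ?_⟩
        intro y hy
        exact hmem y (by simp [hy])

theorem mem_le_sum : ∀ (l : List ℕ) (x : ℕ), x ∈ l → x ≤ l.sum := by
  intro l
  induction l with
  | nil => simp
  | cons y t ih =>
      intro x hx
      rcases List.mem_cons.mp hx with h | h
      · simp [h]
      · have := ih x h
        simp
        omega

theorem mesonic_sum {b : List ℕ} {g : Komp} (h : MesonicGlide b g) :
    (kval g).sum = b.sum + kex g := by
  induction h with
  | zeros k => simp [kval, kex]
  | block z v hv seg a' g' hlen hseg h ih =>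
      rw [kval_sum_append, kex_append, hseg.1, ih]
      simp
      omega

theorem kex_le_length (g : Komp) : kex g ≤ g.length := List.length_filter_le _ _

theorem mesonic_finite (b : List ℕ) : {g : Komp | MesonicGlide b g}.Finite := by
  have hfin : ({q : ℕ × Bool | q.1 ≤ b.sum + b.length}).Finite := by
    have : {q : ℕ × Bool | q.1 ≤ b.sum + b.length} = (Set.Iic (b.sum + b.length)) ×ˢ Set.univ := by
      ext q; simp
    rw [this]
    exact (Set.finite_Iic _).prod Set.finite_univ
  refine Set.Finite.subset (finite_lists hfin b.length) ?_
  intro g hg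
  refine ⟨mesonic_length hg, ?_⟩
  intro x hx
  have h1 : x.1 ≤ (kval g).sum := mem_le_sum _ _ (List.mem_map_of_mem (f := Prod.fst) hx)
  have h2 := mesonic_sum hg
  have h3 := kex_le_length g
  have h4 := mesonic_length hg
  simp only [Set.mem_setOf_eq]
  omega

theorem dominated_finite (a : List ℕ) :
    {b : List ℕ | Dominates b a ∧ _root_.posPart b = _root_.posPart a}.Finite := by
  have hfin : (insert 0 {y : ℕ | y ∈ a}).Finite := (a.finite_toSet).insert 0
  refine Set.Finite.subset (finite_lists hfin a.length) ?_
  intro b hb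
  refine ⟨hb.1.1, ?_⟩
  intro x hx
  by_cases hx0 : x = 0
  · simp [hx0]
  · have : x ∈ _root_.posPart b := by
      unfold _root_.posPart
      rw [List.mem_filter]
      exact ⟨hx, by simpa using hx0⟩
    rw [hb.2] at this
    unfold _root_.posPart at this
    rw [List.mem_filter] at this
    simp
    exact Or.inr this.1

theorem glide_iff (a : List ℕ) (g : Komp) :
    IsGlide a g ↔ ∃ b, (Dominates b a ∧ _root_.posPart b = _root_.posPart a) ∧
      MesonicGlide b g := by
  constructor
  · intro h
    induction h with
    | refl =>
        exact ⟨a, ⟨dominates_refl a, rfl⟩, mesonic_toKomp a.length a le_rfl⟩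
    | tail h₁ step ihstep =>
        obtain ⟨b, ⟨hdom, hpp⟩, hmes⟩ := ihstep
        obtain ⟨b₂, hlen2, hpp2, hdom2, hmes2⟩ := mesonic_step b.length b _ _ le_rfl hmes step
        exact ⟨b₂, ⟨dominates_trans hdom2 hdom, hpp2.trans hpp⟩, hmes2⟩
  · rintro ⟨b, ⟨hdom, hpp⟩, hmes⟩
    exact (reach_toKomp a.length a b le_rfl hdom hpp).trans (mesonic_reach hmes)

theorem stmt1 (a : List ℕ) :
    glidePoly a =
      ∑ᶠ b ∈ {b : List ℕ | Dominates b a ∧ posPart b = posPart a}, kaonPoly b := by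
  have hSU : {g : Komp | IsGlide a g}
      = ⋃ b ∈ {b : List ℕ | Dominates b a ∧ _root_.posPart b = _root_.posPart a},
          {g : Komp | MesonicGlide b g} := by
    ext g
    simp only [Set.mem_setOf_eq, Set.mem_iUnion]
    rw [glide_iff]
    constructor
    · rintro ⟨b, hb, hm⟩; exact ⟨b, hb, hm⟩
    · rintro ⟨b, hb, hm⟩; exact ⟨b, hb, hm⟩
  have hdisj : ({b : List ℕ | Dominates b a ∧ _root_.posPart b = _root_.posPart a}).PairwiseDisjoint
      (fun b => {g : Komp | MesonicGlide b g}) := by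
    intro b hb b' hb' hne
    rw [Function.onFun, Set.disjoint_left]
    intro g hg hg'
    exact hne (mesonic_unique b.length b b' g le_rfl hg hg'
      (hb.2.trans hb'.2.symm) (hb.1.1.trans hb'.1.1.symm))
  rw [glidePoly, hSU]
  rw [finsum_mem_biUnion hdisj (dominated_finite a) (fun b _ => mesonic_finite b)]
  rfl
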